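/- The function L is a strict Lyapunov function for F: if v : I → Δ is a differentiable curve defined on an interval I ⊆ ℝ satisfying v'(t) = F(v(t)) for all t ∈ I, then (d/dt) L(v(t)) = Σ_{i=1}^m v_i(t) (∂L/∂v_i(v(t)))² ≥ 0 for all t ∈ I; in particular t ↦ L(v(t)) is monotone nondecreasing, and (d/dt) L(v(t)) = 0 at some t if and only if F(v(t)) = 0, i.e. v(t) is an equilibrium. -/

import Mathlib

open Filter Finset

/-- `v_i + v_j` as a function of the unordered pair `{i,j}`. -/
noncomputable def pairSum {m : ℕ} (v : Fin m → ℝ) : Sym2 (Fin m) → ℝ :=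
  Sym2.lift ⟨fun i j => v i + v j, fun i j => add_comm (v i) (v j)⟩

/-- The domain `Δ`. -/
def urnDomain {m : ℕ} (G : SimpleGraph (Fin m)) (c : ℝ) : Set (Fin m → ℝ) :=
  {v | (∀ i, 0 ≤ v i) ∧ (∑ i, v i) = 1 ∧ ∀ i j, G.Adj i j → c ≤ v i + v j}

/-- The function `L(v) = -Σ_i v_i + (1/N) Σ_{{i,j} ∈ E} log (v_i + v_j)`. -/
noncomputable def lyap {m : ℕ} (G : SimpleGraph (Fin m)) [DecidableRel G.Adj] (N : ℕ)
    (v : Fin m → ℝ) : ℝ :=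
  -∑ i, v i + (1 / (N : ℝ)) * ∑ e ∈ G.edgeFinset, Real.log (pairSum v e)

/-- `∂L/∂v_i (v) = -1 + (1/N) Σ_{j ∼ i} 1/(v_i + v_j)`. -/
noncomputable def dLyap {m : ℕ} (G : SimpleGraph (Fin m)) [DecidableRel G.Adj] (N : ℕ)
    (i : Fin m) (v : Fin m → ℝ) : ℝ :=
  -1 + (1 / (N : ℝ)) * ∑ j ∈ G.neighborFinset i, 1 / (v i + v j)

section aux
variable {m : ℕ} (G : SimpleGraph (Fin m)) [DecidableRel G.Adj]

lemma dartSum (h : Fin m → Fin m → ℝ) :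
    ∑ d : G.Dart, h d.fst d.snd = ∑ i, ∑ j ∈ G.neighborFinset i, h i j := by
  rw [← Finset.sum_fiberwise univ (fun d : G.Dart => d.fst) (fun d => h d.fst d.snd)]
  refine Finset.sum_congr rfl fun i _ => ?_
  refine Finset.sum_bij' (fun d _ => d.snd) (fun j hj => G.dartOfNeighborSet i ⟨j, by
      simpa [SimpleGraph.mem_neighborFinset] using hj⟩) ?_ ?_ ?_ ?_ ?_
  · intro d hd
    simp only [mem_filter, mem_univ, true_and] at hd
    simpa [SimpleGraph.mem_neighborFinset, ← hd] using d.adj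
  · intro j hj; simp [SimpleGraph.dartOfNeighborSet]
  · intro d hd
    simp only [mem_filter, mem_univ, true_and] at hd
    ext <;> simp [SimpleGraph.dartOfNeighborSet, hd]
  · intro j hj; simp [SimpleGraph.dartOfNeighborSet]
  · intro d hd
    simp only [mem_filter, mem_univ, true_and] at hd
    rw [hd]

lemma dartSymmSum (h : Fin m → Fin m → ℝ) :
    ∑ d : G.Dart, h d.fst d.snd = ∑ d : G.Dart, h d.snd d.fst :=
  Fintype.sum_bijective _ (SimpleGraph.Dart.symm_involutive (G := G)).bijective _ _
    (fun d => by simp)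

lemma dartEdgeSum (g : Sym2 (Fin m) → ℝ) :
    ∑ d : G.Dart, g d.edge = 2 * ∑ e ∈ G.edgeFinset, g e := by
  classical
  rw [← Finset.sum_fiberwise_of_maps_to (g := fun d : G.Dart => d.edge)
      (t := G.edgeFinset) (fun d _ => by rw [SimpleGraph.mem_edgeFinset]; exact d.edge_mem)
      (fun d : G.Dart => g d.edge)]
  rw [Finset.mul_sum]
  refine Finset.sum_congr rfl fun e he => ?_
  have hcard : #({d : G.Dart | d.edge = e} : Finset _) = 2 :=
    G.dart_edge_fiber_card e (by rwa [← SimpleGraph.mem_edgeFinset])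
  have h2 : ∀ d ∈ ({d : G.Dart | d.edge = e} : Finset _), g d.edge = g e := by
    intro d hd; simp only [mem_filter, mem_univ, true_and] at hd; rw [hd]
  rw [Finset.sum_congr rfl h2, Finset.sum_const, hcard]
  ring

/-- Key identity: edge sum of `(F_i+F_j)/(v_i+v_j)` equals the double sum of `F_i/(v_i+v_j)`. -/
lemma edgeSum_key (v F : Fin m → ℝ) :
    ∑ e ∈ G.edgeFinset, pairSum F e / pairSum v e
      = ∑ i, ∑ j ∈ G.neighborFinset i, F i / (v i + v j) := by
  have h2 : (2 : ℝ) * ∑ e ∈ G.edgeFinset, pairSum F e / pairSum v e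
      = 2 * ∑ i, ∑ j ∈ G.neighborFinset i, F i / (v i + v j) := by
    rw [← dartEdgeSum G (fun e => pairSum F e / pairSum v e)]
    have : ∀ d : G.Dart, pairSum F d.edge / pairSum v d.edge
        = F d.fst / (v d.fst + v d.snd) + F d.snd / (v d.fst + v d.snd) := by
      rintro ⟨⟨a, b⟩, hab⟩
      simp only [pairSum, SimpleGraph.Dart.edge, Sym2.lift_mk]
      rw [← add_div]
    rw [Finset.sum_congr rfl fun d _ => this d, Finset.sum_add_distrib]
    rw [dartSymmSum G (fun i j => F j / (v i + v j))]
    have : ∀ d : G.Dart, F d.fst / (v d.snd + v d.fst) = F d.fst / (v d.fst + v d.snd) := by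
      intro d; rw [add_comm]
    rw [Finset.sum_congr rfl fun d _ => this d, ← two_mul,
      dartSum G (fun i j => F i / (v i + v j))]
  linarith

end aux

/-- `L` is a strict Lyapunov function for the vector field
`F_i(v) = v_i ∂L/∂v_i(v)`: along any solution curve `v` of `v' = F(v)` in `Δ`,
`(d/dt) L(v(t)) = Σ_i v_i(t) (∂L/∂v_i(v(t)))² ≥ 0`, so `t ↦ L(v(t))` is nondecreasing, and the
derivative vanishes at `t` iff `v(t)` is an equilibrium, i.e. `F(v(t)) = 0`. -/
theorem lyap_is_strict_lyapunov_function
    {m : ℕ} (hm : 2 ≤ m) (G : SimpleGraph (Fin m)) [DecidableRel G.Adj]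
    (hconn : G.Connected)
    (N : ℕ) (hN : N = G.edgeFinset.card)
    (c : ℝ) (hc0 : 0 < c) (hc1 : c < 1 / (N : ℝ))
    (I : Set ℝ) (hI : I.OrdConnected)
    (v : ℝ → Fin m → ℝ)
    (hvmem : ∀ t ∈ I, v t ∈ urnDomain G c)
    (hode : ∀ t ∈ I, HasDerivWithinAt v (fun i => v t i * dLyap G N i (v t)) I t) :
    (∀ t ∈ I, HasDerivWithinAt (fun s => lyap G N (v s))
        (∑ i, v t i * (dLyap G N i (v t)) ^ 2) I t) ∧
    (∀ t ∈ I, 0 ≤ ∑ i, v t i * (dLyap G N i (v t)) ^ 2) ∧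
    (∀ s ∈ I, ∀ t ∈ I, s ≤ t → lyap G N (v s) ≤ lyap G N (v t)) ∧
    (∀ t ∈ I, ((∑ i, v t i * (dLyap G N i (v t)) ^ 2) = 0 ↔
        ∀ i, v t i * dLyap G N i (v t) = 0)) := by
  -- Part 1: the derivative computation
  have part1 : ∀ t ∈ I, HasDerivWithinAt (fun s => lyap G N (v s))
      (∑ i, v t i * (dLyap G N i (v t)) ^ 2) I t := by
    intro t ht
    set w := v t with hw
    set F : Fin m → ℝ := fun i => w i * dLyap G N i w with hF
    have hvi : ∀ i, HasDerivWithinAt (fun s => v s i) (F i) I t :=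
      fun i => (hasDerivWithinAt_pi.1 (hode t ht)) i
    have h1 : HasDerivWithinAt (fun s => ∑ i, v s i) (∑ i, F i) I t :=
      HasDerivWithinAt.fun_sum fun i _ => hvi i
    have h2 : ∀ e ∈ G.edgeFinset, HasDerivWithinAt (fun s => Real.log (pairSum (v s) e))
        (pairSum F e / pairSum w e) I t := by
      intro e he
      induction e using Sym2.ind with
      | _ i j =>
        have hadj : G.Adj i j := by
          rwa [SimpleGraph.mem_edgeFinset, SimpleGraph.mem_edgeSet] at he
        have hpos : 0 < w i + w j := lt_of_lt_of_le hc0 ((hvmem t ht).2.2 i j hadj)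
        have : HasDerivWithinAt (fun s => v s i + v s j) (F i + F j) I t :=
          (hvi i).add (hvi j)
        simpa [pairSum] using this.log (ne_of_gt hpos)
    have h3 : HasDerivWithinAt (fun s => lyap G N (v s))
        (-∑ i, F i + (1 / (N : ℝ)) * ∑ e ∈ G.edgeFinset, pairSum F e / pairSum w e) I t := by
      simp only [lyap]
      exact h1.neg.add ((HasDerivWithinAt.fun_sum h2).const_mul (1 / (N : ℝ)))
    have hmain : -∑ i, F i + (1 / (N : ℝ)) * ∑ e ∈ G.edgeFinset, pairSum F e / pairSum w e
        = ∑ i, w i * (dLyap G N i w) ^ 2 := by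
      rw [edgeSum_key G w F]
      have hterm : ∀ i, w i * (dLyap G N i w) ^ 2
          = -F i + (1 / (N : ℝ)) * ∑ j ∈ G.neighborFinset i, F i / (w i + w j) := by
        intro i
        have h4 : ∑ j ∈ G.neighborFinset i, F i / (w i + w j)
            = F i * ∑ j ∈ G.neighborFinset i, 1 / (w i + w j) := by
          rw [Finset.mul_sum]
          exact Finset.sum_congr rfl fun j _ => by rw [mul_one_div]
        rw [h4, hF]
        simp only [dLyap]
        ring
      rw [Finset.sum_congr rfl fun i _ => hterm i, Finset.sum_add_distrib, Finset.mul_sum,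
        Finset.sum_neg_distrib]
    exact hmain ▸ h3
  -- Part 2: nonnegativity
  have part2 : ∀ t ∈ I, 0 ≤ ∑ i, v t i * (dLyap G N i (v t)) ^ 2 := by
    intro t ht
    exact Finset.sum_nonneg fun i _ =>
      mul_nonneg ((hvmem t ht).1 i) (sq_nonneg _)
  refine ⟨part1, part2, ?_, ?_⟩
  · -- monotonicity
    have hconv : Convex ℝ I := hI.convex
    have hmono : MonotoneOn (fun s => lyap G N (v s)) I := by
      refine monotoneOn_of_hasDerivWithinAt_nonneg hconv
        (fun x hx => (part1 x hx).continuousWithinAt)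
        (f' := fun t => ∑ i, v t i * (dLyap G N i (v t)) ^ 2)
        (fun x hx => ((part1 x (interior_subset hx)).mono interior_subset))
        (fun x hx => part2 x (interior_subset hx))
    exact fun s hs t ht hst => hmono hs ht hst
  · -- vanishing iff equilibrium
    intro t ht
    constructor
    · intro h0 i
      have hz := (Finset.sum_eq_zero_iff_of_nonneg fun i _ =>
        mul_nonneg ((hvmem t ht).1 i) (sq_nonneg _)).1 h0 i (Finset.mem_univ i)
      rcases mul_eq_zero.1 hz with h | h
      · rw [h, zero_mul]
      · rw [pow_eq_zero_iff (by norm_num)] at h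
        rw [h, mul_zero]
    · intro h
      refine Finset.sum_eq_zero fun i _ => ?_
      rw [sq, ← mul_assoc, h i, zero_mul]
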